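/- The determinant of the quantum Fisher (Helstrom) metric g^H on the set of two-qubit states with maximally disordered subsystems equals 1/Δ(t), where Δ(t) = ((t₁₁+t₂₂)² − (1−t₃₃)²)·((t₁₁−t₂₂)² − (1+t₃₃)²). -/

import Mathlib

/-- The determinant of the Helstrom quantum Fisher metric `g^H` on two-qubit states
with maximally disordered subsystems equals `1/Δ(t)`, where
`Δ(t) = ((t₁₁+t₂₂)² − (1−t₃₃)²)((t₁₁−t₂₂)² − (1+t₃₃)²)`. -/
theorem det_helstrom_metric (a b c : ℝ)
    (h1 : 0 < 1 - a - b - c) (h2 : 0 < 1 - a + b + c)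
    (h3 : 0 < 1 + a - b + c) (h4 : 0 < 1 + a + b - c)
    (Δ : ℝ) (hΔ : Δ = ((a + b)^2 - (1 - c)^2) * ((a - b)^2 - (1 + c)^2))
    (gH : Matrix (Fin 3) (Fin 3) ℝ)
    (hgH : gH =
      !![(1 - (a^2 + b^2 + c^2) - 2*a*b*c)/Δ,
         ((1 + (a^2 + b^2 + c^2) - 2*c^2)*c + 2*a*b)/Δ,
         ((1 + (a^2 + b^2 + c^2) - 2*b^2)*b + 2*a*c)/Δ;
         ((1 + (a^2 + b^2 + c^2) - 2*c^2)*c + 2*a*b)/Δ,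
         (1 - (a^2 + b^2 + c^2) - 2*a*b*c)/Δ,
         ((1 + (a^2 + b^2 + c^2) - 2*a^2)*a + 2*b*c)/Δ;
         ((1 + (a^2 + b^2 + c^2) - 2*b^2)*b + 2*a*c)/Δ,
         ((1 + (a^2 + b^2 + c^2) - 2*a^2)*a + 2*b*c)/Δ,
         (1 - (a^2 + b^2 + c^2) - 2*a*b*c)/Δ]) :
    gH.det = 1/Δ := by
  have hΔpos : 0 < Δ := by
    have : Δ = (1 - a - b - c) * (1 - a + b + c) * ((1 + a - b + c) * (1 + a + b - c)) := by
      rw [hΔ]; ring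
    rw [this]
    positivity
  have hΔne : Δ ≠ 0 := ne_of_gt hΔpos
  subst hgH
  rw [Matrix.det_fin_three]
  simp only [Matrix.of_apply, Matrix.cons_val', Matrix.cons_val_zero, Matrix.cons_val_one, Matrix.cons_val_two, Matrix.tail_cons,
    Matrix.head_cons, Matrix.empty_val', Matrix.cons_val_fin_one, Matrix.head_fin_const]
  field_simp
  rw [hΔ]
  ring_nf
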